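/- A Stone topological algebra A is profinite if and only if the translation monoid M(A) is relatively compact in C(A,A) endowed with the compact-open topology. -/

import Mathlib

universe u v w

open scoped Topology Uniformity

/-- The translation monoid `M(A)`: self-maps of `A` given by terms linear in a
distinguished variable, with all other variables evaluated in `A`. -/
inductive IsTranslation {Ω : ℕ → Type u} {A : Type v}
    (ops : ∀ n, Ω n → (Fin n → A) → A) : (A → A) → Prop
  | id_map : IsTranslation ops id
  | comp {n : ℕ} (w : Ω n) (i : Fin n) (v : Fin n → A) {f : A → A}
      (hf : IsTranslation ops f) :
      IsTranslation ops (fun a => ops n w (Function.update v i (f a)))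

/-- A congruence on an `Ω`-algebra. -/
def IsCongruence {Ω : ℕ → Type u} {A : Type v}
    (ops : ∀ n, Ω n → (Fin n → A) → A) (θ : A → A → Prop) : Prop :=
  Equivalence θ ∧
    ∀ ⦃n : ℕ⦄ (w : Ω n) (u v : Fin n → A),
      (∀ i, θ (u i) (v i)) → θ (ops n w u) (ops n w v)

/-- An equivalence relation saturates `L` when `L` is a union of its classes. -/
def Saturates {A : Type v} (θ : A → A → Prop) (L : Set A) : Prop :=
  ∀ a a', θ a a' → (a ∈ L ↔ a' ∈ L)

/-- The syntactic congruence of `L ⊆ A`. -/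
def synCong {Ω : ℕ → Type u} {A : Type v}
    (ops : ∀ n, Ω n → (Fin n → A) → A) (L : Set A) : A → A → Prop :=
  fun a a' => ∀ f : A → A, IsTranslation ops f → (f a ∈ L ↔ f a' ∈ L)

theorem synCong_equivalence {Ω : ℕ → Type u} {A : Type v}
    (ops : ∀ n, Ω n → (Fin n → A) → A) (L : Set A) :
    Equivalence (synCong ops L) :=
  ⟨fun _ _ _ => Iff.rfl, fun h f hf => (h f hf).symm,
    fun h1 h2 f hf => (h1 f hf).trans (h2 f hf)⟩

/-- Residual finiteness: distinct points are separated by continuous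
homomorphisms onto finite discrete algebras. -/
def ResiduallyFinite {Ω : ℕ → Type u} {A : Type v} [TopologicalSpace A]
    (ops : ∀ n, Ω n → (Fin n → A) → A) : Prop :=
  ∀ a a' : A, a ≠ a' →
    ∃ (B : Type v) (_ : Fintype B) (opsB : ∀ n, Ω n → (Fin n → B) → B) (φ : A → B),
      @Continuous A B _ ⊥ φ ∧
      (∀ (n : ℕ) (w : Ω n) (v : Fin n → A), φ (ops n w v) = opsB n w (fun i => φ (v i))) ∧
      φ a ≠ φ a'

namespace Stmt10Aux

variable {Ω : ℕ → Type u} {A : Type v} {ops : ∀ n, Ω n → (Fin n → A) → A}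

theorem IsTranslation.comp_inner {f : A → A} (hf : IsTranslation ops f)
    {n : ℕ} (w : Ω n) (i : Fin n) (v : Fin n → A) :
    IsTranslation ops (fun a => f (ops n w (Function.update v i a))) := by
  induction hf with
  | id_map => exact IsTranslation.comp w i v IsTranslation.id_map
  | comp w' i' v' hg ih => exact IsTranslation.comp w' i' v' ih

theorem synCong_update (L : Set A) {n : ℕ} (w : Ω n) (i : Fin n) (u : Fin n → A)
    {x y : A} (h : synCong ops L x y) :
    synCong ops L (ops n w (Function.update u i x)) (ops n w (Function.update u i y)) :=
  fun f hf => h _ (IsTranslation.comp_inner hf w i u)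

theorem synCong_ops (L : Set A) {n : ℕ} (w : Ω n) (u v : Fin n → A)
    (huv : ∀ i, synCong ops L (u i) (v i)) :
    synCong ops L (ops n w u) (ops n w v) := by
  have key : ∀ k : ℕ, k ≤ n → synCong ops L (ops n w u)
      (ops n w (fun j => if (j : ℕ) < k then v j else u j)) := by
    intro k
    induction k with
    | zero =>
        intro _
        have h0 : (fun j : Fin n => if (j : ℕ) < 0 then v j else u j) = u := by
          funext j; simp
        rw [h0]
        exact (synCong_equivalence ops L).refl _
    | succ k ih =>
        intro hk
        have hkn : k < n := hk
        set i : Fin n := ⟨k, hkn⟩ with hi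
        set m : Fin n → A := fun j => if (j : ℕ) < k then v j else u j with hm
        have h1 : (fun j : Fin n => if (j : ℕ) < k + 1 then v j else u j)
            = Function.update m i (v i) := by
          funext j
          by_cases hji : j = i
          · subst hji; simp [Function.update_self, hi]
          · have hji' : (j : ℕ) ≠ k := fun hc => hji (Fin.ext hc)
            rw [Function.update_of_ne hji]
            by_cases hjk : (j : ℕ) < k
            · simp [hm, hjk, Nat.lt_succ_of_lt hjk]
            · have h2 : ¬ (j : ℕ) < k + 1 := by omega
              simp [hm, hjk, h2]
        have h2 : m = Function.update m i (u i) := by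
          funext j
          by_cases hji : j = i
          · subst hji; simp [Function.update_self, hm, hi]
          · rw [Function.update_of_ne hji]
        refine (synCong_equivalence ops L).trans (ih (Nat.le_of_succ_le hk)) ?_
        rw [h1]
        conv_lhs => rw [h2]
        exact synCong_update L w i m (huv i)
  have hfin : (fun j : Fin n => if (j : ℕ) < n then v j else u j) = v := by
    funext j; simp [j.isLt]
  have := key n le_rfl
  rwa [hfin] at this

theorem IsTranslation.continuous' [TopologicalSpace A]
    (hc : ∀ (n : ℕ) (w : Ω n), Continuous (ops n w))
    {f : A → A} (hf : IsTranslation ops f) : Continuous f := by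
  induction hf with
  | id_map => exact continuous_id
  | comp w i v hg ih =>
      refine (hc _ w).comp (continuous_pi fun j => ?_)
      simp only [Function.update_apply]
      by_cases hji : j = i
      · simpa [hji] using ih
      · simp only [hji, if_false]
        exact continuous_const

theorem IsTranslation.descend {f : A → A} (hf : IsTranslation ops f) {B : Type w}
    (opsB : ∀ n, Ω n → (Fin n → B) → B) (φ : A → B)
    (hφ : ∀ (n : ℕ) (w : Ω n) (v : Fin n → A), φ (ops n w v) = opsB n w fun i => φ (v i)) :
    ∃ g : B → B, ∀ a, φ (f a) = g (φ a) := by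
  induction hf with
  | id_map => exact ⟨id, fun _ => rfl⟩
  | comp w i v hg ih =>
      obtain ⟨g, hg⟩ := ih
      refine ⟨fun b => opsB _ w (Function.update (fun j => φ (v j)) i (g b)), fun a => ?_⟩
      rw [hφ]
      congr 1
      funext j
      by_cases hji : j = i
      · subst hji; simp [Function.update_self, hg]
      · simp [Function.update_of_ne hji]

theorem clopen_of_bot_continuous {B : Type w} (φ : A → B) [TopologicalSpace A]
    (hφ : @Continuous A B _ ⊥ φ) (S : Set B) : IsClopen (φ ⁻¹' S) := by
  letI : TopologicalSpace B := ⊥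
  haveI : DiscreteTopology B := ⟨rfl⟩
  exact (isClopen_discrete S).preimage hφ

theorem rf_basis [TopologicalSpace A] [CompactSpace A] [T2Space A]
    (hRF : ResiduallyFinite ops) (p : A) {O : Set A} (hO : IsOpen O) (hp : p ∈ O) :
    ∃ (ι : Type v) (_ : Finite ι) (B : ι → Type v) (_ : ∀ k, Fintype (B k))
      (opsB : ∀ k (n : ℕ), Ω n → (Fin n → B k) → B k) (φ : ∀ k, A → B k) (b : ∀ k, B k),
      (∀ k, @Continuous A (B k) _ ⊥ (φ k)) ∧
      (∀ k (n : ℕ) (w : Ω n) (v : Fin n → A), φ k (ops n w v) = opsB k n w fun i => φ k (v i)) ∧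
      p ∈ (⋂ k, φ k ⁻¹' {b k}) ∧ (⋂ k, φ k ⁻¹' {b k}) ⊆ O := by
  have hq : ∀ q : (Oᶜ : Set A), p ≠ (q : A) := by
    rintro ⟨q, hq⟩ rfl; exact hq hp
  choose B fB opsB φ hcont hhom hsep using fun q : (Oᶜ : Set A) => hRF p q (hq q)
  have hcover : Oᶜ ⊆ ⋃ q : (Oᶜ : Set A), (φ q ⁻¹' {φ q p})ᶜ := by
    intro x hx
    exact Set.mem_iUnion.2 ⟨⟨x, hx⟩, fun hmem =>
      hsep ⟨x, hx⟩ (Set.mem_singleton_iff.mp hmem).symm⟩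
  obtain ⟨s, hs⟩ := (hO.isClosed_compl.isCompact).elim_finite_subcover
    (fun q : (Oᶜ : Set A) => (φ q ⁻¹' {φ q p})ᶜ)
    (fun q => (clopen_of_bot_continuous (φ q) (hcont q) _).compl.isOpen) hcover
  refine ⟨{q // q ∈ s}, inferInstance, fun k => B k.1, fun k => fB k.1,
    fun k => opsB k.1, fun k => φ k.1, fun k => φ k.1 p,
    fun k => hcont k.1, fun k => hhom k.1, ?_, ?_⟩
  · exact Set.mem_iInter.2 fun k => rfl
  · intro x hx
    by_contra hxO
    obtain ⟨q, hq1, hq2⟩ := Set.mem_iUnion₂.1 (hs hxO)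
    exact hq2 (Set.mem_iInter.1 hx ⟨q, hq1⟩)

theorem finite_transl_preimages {ι : Type w} [Finite ι] {B : ι → Type v} [∀ k, Finite (B k)]
    (opsB : ∀ k (n : ℕ), Ω n → (Fin n → B k) → B k) (φ : ∀ k, A → B k)
    (hφ : ∀ k (n : ℕ) (w : Ω n) (v : Fin n → A), φ k (ops n w v) = opsB k n w fun i => φ k (v i))
    (D : ∀ k, Set (B k)) :
    {T : Set A | ∃ f, IsTranslation ops f ∧ f ⁻¹' (⋂ k, φ k ⁻¹' D k) = T}.Finite := by
  apply Set.Finite.subset (Set.finite_range (fun c : ∀ k, Set (B k) => ⋂ k, φ k ⁻¹' c k))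
  rintro T ⟨f, hf, rfl⟩
  choose g hg using fun k => IsTranslation.descend hf (opsB k) (φ k) (hφ k)
  refine ⟨fun k => g k ⁻¹' D k, ?_⟩
  ext a
  simp [hg]

end Stmt10Aux

/-- A Stone topological algebra is profinite iff its translation monoid is
relatively compact in `C(A,A)` with the compact-open topology. -/
theorem stmt10 {Ω : ℕ → Type u} {A : Type v} [TopologicalSpace A]
    [CompactSpace A] [T2Space A] [TotallyDisconnectedSpace A]
    (ops : ∀ n, Ω n → (Fin n → A) → A)
    (hc : ∀ (n : ℕ) (w : Ω n), Continuous (ops n w)) :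
    ResiduallyFinite ops ↔
      ∃ K : Set C(A, A), IsCompact K ∧
        ∀ f : A → A, IsTranslation ops f → ∃ g ∈ K, ⇑g = f := by
  constructor
  · -- forward direction
    intro hRF
    letI : UniformSpace A := uniformSpaceOfCompactR1
    set T : Set (A → A) := {f | IsTranslation ops f} with hT
    have hTeq : T.Equicontinuous := by
      intro a V hV
      have key : ∀ p : A, ∃ D : Set A, p ∈ D ∧ IsOpen D ∧ D ×ˢ D ⊆ V ∧
          {S : Set A | ∃ f, IsTranslation ops f ∧ f ⁻¹' D = S}.Finite := by
        intro p
        have hVp : V ∈ 𝓝 (p, p) := nhds_le_uniformity p hV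
        rw [mem_nhds_prod_iff] at hVp
        obtain ⟨u1, hu1, u2, hu2, huv⟩ := hVp
        obtain ⟨O, hOsub, hOopen, hpO⟩ := mem_nhds_iff.1 (Filter.inter_mem hu1 hu2)
        obtain ⟨ι, hι, B, fB, opsB, φ, b, hcont, hhom, hpD, hDO⟩ :=
          Stmt10Aux.rf_basis hRF p hOopen hpO
        haveI := hι
        haveI : ∀ k, Finite (B k) := fun k => @Finite.of_fintype _ (fB k)
        refine ⟨⋂ k, φ k ⁻¹' {b k}, hpD, ?_, ?_, ?_⟩
        · exact isOpen_iInter_of_finite fun k =>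
            (Stmt10Aux.clopen_of_bot_continuous (φ k) (hcont k) _).isOpen
        · rintro ⟨x, y⟩ ⟨hx, hy⟩
          exact huv ⟨(hOsub (hDO hx)).1, (hOsub (hDO hy)).2⟩
        · exact Stmt10Aux.finite_transl_preimages opsB φ hhom _
      choose D hD1 hD2 hD3 hD4 using key
      obtain ⟨P, hP⟩ := isCompact_univ.elim_finite_subcover D hD2
        (fun x _ => Set.mem_iUnion.2 ⟨x, hD1 x⟩)
      set U : Set A :=
        ⋂ p ∈ P, ⋂₀ {S : Set A | (∃ f, IsTranslation ops f ∧ f ⁻¹' (D p) = S) ∧ a ∈ S}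
        with hU
      have hUopen : IsOpen U := by
        refine isOpen_biInter_finset fun p _ => ?_
        refine Set.Finite.isOpen_sInter ((hD4 p).subset fun S hS => hS.1) ?_
        rintro S ⟨⟨f, hf, rfl⟩, -⟩
        exact (hD2 p).preimage (Stmt10Aux.IsTranslation.continuous' hc hf)
      have haU : a ∈ U :=
        Set.mem_iInter₂.2 fun p _ => Set.mem_sInter.2 fun S hS => hS.2
      refine Filter.eventually_iff_exists_mem.2 ⟨U, hUopen.mem_nhds haU, ?_⟩
      rintro x hx ⟨f, hf⟩
      obtain ⟨p, hpP, hfa⟩ := Set.mem_iUnion₂.1 (hP (Set.mem_univ (f a)))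
      have hxW : x ∈ f ⁻¹' (D p) :=
        Set.mem_sInter.1 (Set.mem_iInter₂.1 hx p hpP) _ ⟨⟨f, hf, rfl⟩, hfa⟩
      exact hD3 p ⟨hfa, hxW⟩
    have hcls : Set.Equicontinuous (closure T) := hTeq.closure
    refine ⟨{g : C(A, A) | ⇑g ∈ closure T}, ?_, ?_⟩
    · have himage : ContinuousMap.toFun '' {g : C(A, A) | ⇑g ∈ closure T} = closure T := by
        apply Set.Subset.antisymm
        · rintro _ ⟨g, hg, rfl⟩; exact hg
        · intro g hg
          exact ⟨⟨g, hcls.continuous ⟨g, hg⟩⟩, hg, rfl⟩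
      apply ArzelaAscoli.isCompact_of_equicontinuous
      · rw [himage]
        exact isClosed_closure.isCompact
      · intro x V hV
        filter_upwards [hcls x V hV] with y h i
        exact h ⟨⇑(i : C(A, A)), i.2⟩
    · intro f hf
      exact ⟨⟨f, Stmt10Aux.IsTranslation.continuous' hc hf⟩, subset_closure hf, rfl⟩
  · -- backward direction
    rintro ⟨K, hK, hKT⟩ a a' haa'
    classical
    obtain ⟨L, hL, haL, ha'L⟩ := exists_isClopen_of_totally_separated haa'
    have hcov : K ⊆ ⋃ U : {U : Set A // IsClopen U},
        {g : C(A, A) | Set.MapsTo g U.1 L ∧ Set.MapsTo g U.1ᶜ Lᶜ} := by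
      intro g hg
      exact Set.mem_iUnion.2 ⟨⟨⇑g ⁻¹' L, hL.preimage g.continuous⟩,
        fun x hx => hx, fun x hx hxL => hx hxL⟩
    have hopen : ∀ U : {U : Set A // IsClopen U},
        IsOpen {g : C(A, A) | Set.MapsTo g U.1 L ∧ Set.MapsTo g U.1ᶜ Lᶜ} := by
      intro U
      have h1 := ContinuousMap.isOpen_setOf_mapsTo (X := A) (Y := A)
        U.2.isClosed.isCompact hL.isOpen
      have h2 := ContinuousMap.isOpen_setOf_mapsTo (X := A) (Y := A)
        U.2.compl.isClosed.isCompact hL.compl.isOpen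
      exact h1.inter h2
    obtain ⟨t, ht⟩ := hK.elim_finite_subcover _ hopen hcov
    have hmem : ∀ f : A → A, IsTranslation ops f → ∃ U ∈ t, f ⁻¹' L = U.1 := by
      intro f hf
      obtain ⟨g, hgK, hgf⟩ := hKT f hf
      obtain ⟨U, hUt, hgU⟩ := Set.mem_iUnion₂.1 (ht hgK)
      refine ⟨U, hUt, ?_⟩
      rw [← hgf]
      apply Set.Subset.antisymm
      · intro x hx
        by_contra hxU
        exact hgU.2 hxU hx
      · exact hgU.1
    set χ : A → ({U : {U : Set A // IsClopen U} // U ∈ t} → Prop) :=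
      fun x U => x ∈ U.1.1 with hχdef
    have hχ : ∀ x y, χ x = χ y → synCong ops L x y := by
      intro x y hxy f hf
      obtain ⟨U, hUt, hU⟩ := hmem f hf
      have h1 : (x ∈ U.1) = (y ∈ U.1) := congrFun hxy ⟨U, hUt⟩
      calc f x ∈ L ↔ x ∈ U.1 := by rw [← hU]; exact Iff.rfl
        _ ↔ y ∈ U.1 := iff_of_eq h1
        _ ↔ f y ∈ L := by rw [← hU]; exact Iff.rfl
    let st : Setoid A := ⟨synCong ops L, synCong_equivalence ops L⟩
    let B := Quotient st
    have hBfin : Finite B := by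
      have hsurj : Function.Surjective
          (fun y : Set.range χ => (Quotient.mk st y.2.choose : B)) := by
        intro b
        obtain ⟨x, rfl⟩ := Quotient.exists_rep b
        refine ⟨⟨χ x, x, rfl⟩, ?_⟩
        exact Quotient.sound (hχ _ _ ((Set.mem_range.1 (⟨χ x, x, rfl⟩ : Set.range χ).2).choose_spec))
      exact Finite.of_surjective _ hsurj
    haveI := hBfin
    haveI : Fintype B := Fintype.ofFinite B
    let φ : A → B := Quotient.mk st
    let opsB : ∀ n, Ω n → (Fin n → B) → B := fun n w vB => φ (ops n w (fun i => (vB i).out))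
    have hhom : ∀ (n : ℕ) (w : Ω n) (v : Fin n → A),
        φ (ops n w v) = opsB n w fun i => φ (v i) := by
      intro n w v
      apply Quotient.sound
      apply Stmt10Aux.synCong_ops
      intro i
      exact (synCong_equivalence ops L).symm (Quotient.mk_out (v i))
    have hblock_open : ∀ x : A, IsOpen {y | χ y = χ x} := by
      intro x
      have heq : {y | χ y = χ x} = ⋂ U : {U : {U : Set A // IsClopen U} // U ∈ t},
          {y | χ y U = χ x U} := by
        ext y; simp [funext_iff, Set.mem_iInter]
      rw [heq]
      refine isOpen_iInter_of_finite fun U => ?_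
      by_cases hx : x ∈ U.1.1
      · have : {y | χ y U = χ x U} = U.1.1 := by
          ext y; simp only [hχdef, Set.mem_setOf_eq, eq_iff_iff]
          exact ⟨fun h => h.2 hx, fun h => ⟨fun _ => hx, fun _ => h⟩⟩
        rw [this]; exact U.1.2.isOpen
      · have : {y | χ y U = χ x U} = U.1.1ᶜ := by
          ext y; simp only [hχdef, Set.mem_setOf_eq, eq_iff_iff, Set.mem_compl_iff]
          exact ⟨fun h hy => hx (h.1 hy), fun h => ⟨fun hy => absurd hy h, fun hx' => absurd hx' hx⟩⟩
        rw [this]; exact U.1.2.compl.isOpen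
    have hcontφ : @Continuous A B _ ⊥ φ := by
      refine (@continuous_def A B _ ⊥ φ).2 fun s _ => ?_
      have heq : φ ⁻¹' s = ⋃ x ∈ φ ⁻¹' s, {y | χ y = χ x} := by
        ext y
        constructor
        · intro hy; exact Set.mem_biUnion hy rfl
        · intro hy
          obtain ⟨x, hx, hyx⟩ := Set.mem_iUnion₂.1 hy
          have : φ y = φ x := Quotient.sound (hχ y x hyx)
          show φ y ∈ s
          rw [this]; exact hx
      rw [heq]
      exact isOpen_biUnion fun x _ => hblock_open x
    refine ⟨B, inferInstance, opsB, φ, hcontφ, hhom, ?_⟩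
    intro h
    have hsyn : synCong ops L a a' := Quotient.exact h
    have := hsyn id IsTranslation.id_map
    exact ha'L (this.1 haL)
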